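/- arXiv:1108.1989 — 2 statements merged into one kernel-verified Lean document; each statement's English description precedes it below -/
import Mathlib

section
/- Let $P \in \mathbb{R}^{n\times n}$ be symmetric positive definite, let $\Lambda$ be the diagonal matrix with the same diagonal as $P$, let $\Omega = P - \Lambda$, and let $\bar\Omega$ be the diagonal matrix with $\bar\Omega_{ii} = \sum_j |\Omega_{ij}|$. Then for any $\alpha > 1/2$, the matrix $\Lambda + 2\alpha\bar\Omega - \Omega$ is positive definite (assuming all diagonal entries of $P$ are positive, which holds since $P$ is positive definite). -/
open Finset

lemma abs_quad_bound (n : ℕ) (Ω : Matrix (Fin n) (Fin n) ℝ)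
    (hsym : ∀ i j, Ω j i = Ω i j) (x : Fin n → ℝ) :
    ∑ i, ∑ j, x i * (Ω i j * x j) ≤ ∑ i, ∑ j, |Ω i j| * x i ^ 2 := by
  have h1 : ∑ i, ∑ j, x i * (Ω i j * x j)
      ≤ ∑ i : Fin n, ∑ j : Fin n, |Ω i j| * (|x i| * |x j|) := by
    apply Finset.sum_le_sum; intro i _
    apply Finset.sum_le_sum; intro j _
    calc x i * (Ω i j * x j) ≤ |x i * (Ω i j * x j)| := le_abs_self _
    _ = |Ω i j| * (|x i| * |x j|) := by rw [abs_mul, abs_mul]; ring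
  have h2 : ∑ i : Fin n, ∑ j : Fin n, |Ω i j| * (|x i| * |x j|)
      ≤ ∑ i : Fin n, ∑ j : Fin n, |Ω i j| * ((x i ^ 2 + x j ^ 2) / 2) := by
    apply Finset.sum_le_sum; intro i _
    apply Finset.sum_le_sum; intro j _
    have habs : |x i| * |x j| ≤ (x i ^ 2 + x j ^ 2) / 2 := by
      nlinarith [sq_nonneg (|x i| - |x j|), sq_abs (x i), sq_abs (x j)]
    exact mul_le_mul_of_nonneg_left habs (abs_nonneg _)
  have h3 : ∑ i : Fin n, ∑ j : Fin n, |Ω i j| * ((x i ^ 2 + x j ^ 2) / 2)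
      = ∑ i, ∑ j, |Ω i j| * x i ^ 2 := by
    have hswap : ∑ i : Fin n, ∑ j : Fin n, |Ω i j| * x j ^ 2
        = ∑ i : Fin n, ∑ j : Fin n, |Ω i j| * x i ^ 2 := by
      rw [Finset.sum_comm]
      simp_rw [hsym]
    calc ∑ i : Fin n, ∑ j : Fin n, |Ω i j| * ((x i ^ 2 + x j ^ 2) / 2)
        = (∑ i : Fin n, ∑ j : Fin n, |Ω i j| * x i ^ 2
          + ∑ i : Fin n, ∑ j : Fin n, |Ω i j| * x j ^ 2) / 2 := by
          rw [← Finset.sum_add_distrib]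
          rw [Finset.sum_div]
          apply Finset.sum_congr rfl; intro i _
          rw [← Finset.sum_add_distrib, Finset.sum_div]
          apply Finset.sum_congr rfl; intro j _
          ring
    _ = ∑ i, ∑ j, |Ω i j| * x i ^ 2 := by rw [hswap]; ring
  linarith

lemma diag_quad (n : ℕ) (d : Fin n → ℝ) (x : Fin n → ℝ) (i : Fin n) :
    ∑ j, x i * (Matrix.diagonal d i j * x j) = d i * x i ^ 2 := by
  rw [Finset.sum_eq_single i]
  · rw [Matrix.diagonal_apply_eq]; ring
  · intro j _ hj
    rw [Matrix.diagonal_apply_ne _ (Ne.symm hj)]; ring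
  · simp

theorem stmt_5 (n : ℕ) (P : Matrix (Fin n) (Fin n) ℝ) (hP : P.PosDef)
    (Λ Ω Ωb : Matrix (Fin n) (Fin n) ℝ)
    (hΛ : Λ = Matrix.diagonal (fun i => P i i))
    (hΩ : Ω = P - Λ)
    (hΩb : Ωb = Matrix.diagonal (fun i => ∑ j, |Ω i j|))
    (α : ℝ) (hα : 1 / 2 < α) :
    (Λ + (2 * α) • Ωb - Ω).PosDef := by
  have hPsym : ∀ i j, P j i = P i j := fun i j => by
    have := hP.1
    exact congrFun (congrFun this j) i |>.symm ▸ by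
      have h := congrFun (congrFun hP.1 j) i
      simpa [Matrix.conjTranspose_apply] using h
  have hΩsym : ∀ i j, Ω j i = Ω i j := by
    intro i j
    subst hΩ hΛ
    by_cases h : i = j
    · subst h; rfl
    · simp [Matrix.diagonal_apply_ne _ h, Matrix.diagonal_apply_ne' _ h, hPsym i j]
  have hdiag : ∀ i, 0 < P i i := fun i => by
    have hne : (Pi.single i (1:ℝ) : Fin n → ℝ) ≠ 0 := by
      intro h
      have := congrFun h i
      simp at this
    have := hP.dotProduct_mulVec_pos hne
    simpa [dotProduct, Matrix.mulVec, Pi.single_apply, Finset.sum_ite_eq,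
      Finset.sum_ite_eq'] using this
  refine Matrix.PosDef.of_dotProduct_mulVec_pos ?_ ?_
  · -- Hermitian
    apply Matrix.IsHermitian.sub
    · apply Matrix.IsHermitian.add
      · rw [hΛ]; exact Matrix.isHermitian_diagonal _
      · show Matrix.conjTranspose ((2 * α) • Ωb) = (2 * α) • Ωb
        rw [Matrix.conjTranspose_smul, hΩb, Matrix.diagonal_conjTranspose]
        simp
    · rw [hΩ, hΛ]; exact hP.1.sub (Matrix.isHermitian_diagonal _)
  · intro x hx
    have hexp : dotProduct (star x) ((Λ + (2 * α) • Ωb - Ω).mulVec x)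
        = ∑ i, P i i * x i ^ 2
          + 2 * α * ∑ i, (∑ j, |Ω i j|) * x i ^ 2
          - ∑ i, ∑ j, x i * (Ω i j * x j) := by
      subst hΛ hΩb
      simp only [dotProduct, Matrix.mulVec, star_trivial, smul_eq_mul]
      rw [Finset.mul_sum, ← Finset.sum_add_distrib, ← Finset.sum_sub_distrib]
      apply Finset.sum_congr rfl; intro i _
      rw [Finset.mul_sum]
      have hrow : ∀ j : Fin n,
          x i * ((((Matrix.diagonal fun k => P k k)
              + (2 * α) • Matrix.diagonal fun k => ∑ l, |Ω k l|) - Ω) i j * x j)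
          = (x i * ((Matrix.diagonal fun k => P k k) i j * x j)
              + (2 * α) * (x i * ((Matrix.diagonal fun k => ∑ l, |Ω k l|) i j * x j)))
            - x i * (Ω i j * x j) := by
        intro j
        simp only [Matrix.sub_apply, Matrix.add_apply, Matrix.smul_apply, smul_eq_mul]
        ring
      rw [Finset.sum_congr rfl (fun j _ => hrow j), Finset.sum_sub_distrib,
        Finset.sum_add_distrib, diag_quad]
      congr 1
      congr 1
      rw [← Finset.mul_sum, diag_quad]
    rw [hexp]
    have hkey := abs_quad_bound n Ω hΩsym x
    have hS2 : ∑ i, (∑ j, |Ω i j|) * x i ^ 2 = ∑ i, ∑ j, |Ω i j| * x i ^ 2 := by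
      apply Finset.sum_congr rfl; intro i _; rw [Finset.sum_mul]
    have hS2nonneg : (0:ℝ) ≤ ∑ i, ∑ j, |Ω i j| * x i ^ 2 := by
      apply Finset.sum_nonneg; intro i _
      apply Finset.sum_nonneg; intro j _
      positivity
    have hS1 : 0 < ∑ i, P i i * x i ^ 2 := by
      obtain ⟨i, hi⟩ := Function.ne_iff.mp hx
      apply Finset.sum_pos'
      · intro j _; have := (hdiag j).le; positivity
      · exact ⟨i, Finset.mem_univ i,
          mul_pos (hdiag i) (lt_of_le_of_ne (sq_nonneg _) (Ne.symm (pow_ne_zero 2 hi)))⟩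
    rw [hS2]
    nlinarith [hkey, hS1, hS2nonneg]
end

section
/- Let $P \in \mathbb{R}^{n\times n}$ be symmetric positive definite, $\Lambda$ the diagonal of $P$, $\Omega = P - \Lambda$, and $\bar\Omega$ the diagonal matrix with $\bar\Omega_{ii} = \sum_j |\Omega_{ij}|$. For any $\alpha > 1/2$ and any vector $d$, the sequence generated by $w^{k+1} = (\Lambda + \alpha\bar\Omega)^{-1}(\alpha\bar\Omega - \Omega) w^k + (\Lambda + \alpha\bar\Omega)^{-1} d$ converges, for any initial vector $w^0$, to the unique solution of $P w = d$. -/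
open scoped Matrix

lemma symmdot {n : ℕ} (M : Matrix (Fin n) (Fin n) ℝ) (hM : Mᵀ = M) (u v : Fin n → ℝ) :
    u ⬝ᵥ M *ᵥ v = v ⬝ᵥ M *ᵥ u := by
  rw [Matrix.dotProduct_mulVec, ← Matrix.mulVec_transpose, hM, dotProduct_comm]

lemma coercive {n : ℕ} (hn : n ≠ 0) (Q : Matrix (Fin n) (Fin n) ℝ) (hQ : Q.PosDef) :
    ∃ m > 0, ∀ x : Fin n → ℝ, m * (x ⬝ᵥ x) ≤ x ⬝ᵥ Q *ᵥ x := by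
  classical
  have key : ∀ y : EuclideanSpace ℝ (Fin n), ‖y‖ ^ 2 = (y : Fin n → ℝ) ⬝ᵥ (y : Fin n → ℝ) := by
    intro y
    rw [EuclideanSpace.norm_eq, Real.sq_sqrt (by positivity)]
    simp [dotProduct, Real.norm_eq_abs, sq_abs, pow_two]
  have hcont : Continuous (fun x : EuclideanSpace ℝ (Fin n) => (x : Fin n → ℝ) ⬝ᵥ Q *ᵥ (x : Fin n → ℝ)) := by
    simp only [dotProduct, Matrix.mulVec, dotProduct]
    fun_prop
  have hne : (Metric.sphere (0 : EuclideanSpace ℝ (Fin n)) 1).Nonempty := by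
    haveI : Nonempty (Fin n) := ⟨⟨0, Nat.pos_of_ne_zero hn⟩⟩
    exact NormedSpace.sphere_nonempty.mpr zero_le_one
  obtain ⟨x₀, hx₀s, hmin⟩ := (isCompact_sphere (0:EuclideanSpace ℝ (Fin n)) 1).exists_isMinOn hne hcont.continuousOn
  have hx₀norm : ‖x₀‖ = 1 := mem_sphere_zero_iff_norm.mp hx₀s
  have hx₀ne : x₀ ≠ 0 := by
    intro h; rw [h] at hx₀norm; simp at hx₀norm
  refine ⟨x₀ ⬝ᵥ Q *ᵥ x₀, by simpa using hQ.dotProduct_mulVec_pos (x := x₀.ofLp) (by simpa using hx₀ne), ?_⟩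
  intro x
  rcases eq_or_ne x 0 with rfl | hx
  · simp
  set y : EuclideanSpace ℝ (Fin n) := (WithLp.equiv 2 (Fin n → ℝ)).symm x with hy
  have hyx : (y : Fin n → ℝ) = x := rfl
  have hyne : y ≠ 0 := by
    simpa [hy] using hx
  have hxE : ‖y‖ ≠ 0 := norm_ne_zero_iff.mpr hyne
  set c : ℝ := ‖y‖ with hc
  have hcpos : 0 < c := lt_of_le_of_ne (norm_nonneg _) (Ne.symm hxE)
  have husph : (c⁻¹ • y) ∈ Metric.sphere (0 : EuclideanSpace ℝ (Fin n)) 1 := by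
    rw [mem_sphere_zero_iff_norm, norm_smul]
    rw [norm_inv, Real.norm_eq_abs, abs_of_pos hcpos]
    exact inv_mul_cancel₀ hxE
  have hle : x₀ ⬝ᵥ Q *ᵥ x₀ ≤ ((c⁻¹ • y : EuclideanSpace ℝ (Fin n)) : Fin n → ℝ) ⬝ᵥ Q *ᵥ ((c⁻¹ • y : EuclideanSpace ℝ (Fin n)) : Fin n → ℝ) := hmin husph
  have hval : ((c⁻¹ • y : EuclideanSpace ℝ (Fin n)) : Fin n → ℝ) ⬝ᵥ Q *ᵥ ((c⁻¹ • y : EuclideanSpace ℝ (Fin n)) : Fin n → ℝ) = c⁻¹ * (c⁻¹ * (x ⬝ᵥ Q *ᵥ x)) := by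
    show (c⁻¹ • x) ⬝ᵥ Q *ᵥ (c⁻¹ • x) = _
    simp [smul_dotProduct, Matrix.mulVec_smul, dotProduct_smul, smul_eq_mul, mul_assoc]
  have hnorm : c ^ 2 = x ⬝ᵥ x := by rw [hc, key y]; rfl
  rw [hval] at hle
  have h2 := mul_le_mul_of_nonneg_left hle (le_of_lt (by positivity : (0:ℝ) < c^2))
  calc (x₀ ⬝ᵥ Q *ᵥ x₀) * (x ⬝ᵥ x) = c^2 * (x₀ ⬝ᵥ Q *ᵥ x₀) := by rw [hnorm]; ring
    _ ≤ c^2 * (c⁻¹ * (c⁻¹ * (x ⬝ᵥ Q *ᵥ x))) := h2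
    _ = x ⬝ᵥ Q *ᵥ x := by field_simp

set_option maxHeartbeats 1000000

theorem stmt_6 (n : ℕ) (P : Matrix (Fin n) (Fin n) ℝ) (hP : P.PosDef)
    (Λ Ω Ωb : Matrix (Fin n) (Fin n) ℝ)
    (hΛ : Λ = Matrix.diagonal (fun i => P i i))
    (hΩ : Ω = P - Λ)
    (hΩb : Ωb = Matrix.diagonal (fun i => ∑ j, |Ω i j|))
    (α : ℝ) (hα : 1 / 2 < α)
    (d : Fin n → ℝ) (w : ℕ → Fin n → ℝ)
    (hw : ∀ k, w (k + 1) =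
      (Λ + α • Ωb)⁻¹ *ᵥ ((α • Ωb - Ω) *ᵥ w k) + (Λ + α • Ωb)⁻¹ *ᵥ d) :
    Filter.Tendsto w Filter.atTop (nhds (P⁻¹ *ᵥ d)) := by
  classical
  rcases eq_or_ne n 0 with rfl | hn
  · haveI : Subsingleton (Fin 0 → ℝ) := ⟨fun a b => funext fun i => i.elim0⟩
    have : w = fun _ => P⁻¹ *ᵥ d := funext fun k => Subsingleton.elim _ _
    rw [this]; exact tendsto_const_nhds
  -- basic facts
  have hαpos : (0:ℝ) < α := by linarith
  have hPsymm : Pᵀ = P := by simpa [Matrix.IsSymm] using hP.1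
  have hdiagP : ∀ i, 0 < P i i := fun i => by
    have := hP.dotProduct_mulVec_pos (x := Pi.single i 1) (by simp)
    simpa using this
  have hΛsymm : Λᵀ = Λ := by rw [hΛ]; exact Matrix.diagonal_transpose _
  have hΩsymm : Ωᵀ = Ω := by rw [hΩ, Matrix.transpose_sub, hPsymm, hΛsymm]
  have hΩbsymm : Ωbᵀ = Ωb := by rw [hΩb]; exact Matrix.diagonal_transpose _
  set A : Matrix (Fin n) (Fin n) ℝ := Λ + α • Ωb with hAdef
  set B : Matrix (Fin n) (Fin n) ℝ := α • Ωb - Ω with hBdef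
  have hAsymm : Aᵀ = A := by
    rw [hAdef, Matrix.transpose_add, Matrix.transpose_smul, hΛsymm, hΩbsymm]
  have hBsymm : Bᵀ = B := by
    rw [hBdef, Matrix.transpose_sub, Matrix.transpose_smul, hΩsymm, hΩbsymm]
  have hAB : A - B = P := by
    rw [hAdef, hBdef, hΩ]; abel
  have hAdiag : A = Matrix.diagonal (fun i => P i i + α * ∑ j, |Ω i j|) := by
    rw [hAdef, hΛ, hΩb, ← Matrix.diagonal_smul, ← Matrix.diagonal_add]
    rfl
  have hApos : A.PosDef := by
    rw [hAdiag]
    exact Matrix.PosDef.diagonal fun i => by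
      nlinarith [hdiagP i, Finset.sum_nonneg (fun j _ => abs_nonneg (Ω i j)) (s := Finset.univ)]
  -- quadratic forms of diagonal matrices
  have hquadΛ : ∀ x : Fin n → ℝ, x ⬝ᵥ Λ *ᵥ x = ∑ i, P i i * x i ^ 2 := by
    intro x
    rw [hΛ]
    simp [dotProduct, Matrix.mulVec_diagonal]
    exact Finset.sum_congr rfl fun i _ => by ring
  have hquadΩb : ∀ x : Fin n → ℝ, x ⬝ᵥ Ωb *ᵥ x = ∑ i, (∑ j, |Ω i j|) * x i ^ 2 := by
    intro x
    rw [hΩb]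
    simp [dotProduct, Matrix.mulVec_diagonal]
    exact Finset.sum_congr rfl fun i _ => by ring
  -- key bound on Ω's quadratic form
  have hSbound : ∀ x : Fin n → ℝ, |x ⬝ᵥ Ω *ᵥ x| ≤ ∑ i, (∑ j, |Ω i j|) * x i ^ 2 := by
    intro x
    have habs : ∀ i j, |Ω j i| = |Ω i j| := fun i j => by
      rw [show Ω j i = Ωᵀ i j from rfl, hΩsymm]
    have h1 : x ⬝ᵥ Ω *ᵥ x = ∑ i, ∑ j, x i * (Ω i j * x j) := by
      simp [dotProduct, Matrix.mulVec, Finset.mul_sum]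
    rw [h1]
    calc |∑ i, ∑ j, x i * (Ω i j * x j)|
        ≤ ∑ i, |∑ j, x i * (Ω i j * x j)| := Finset.abs_sum_le_sum_abs _ _
      _ ≤ ∑ i, ∑ j, |x i * (Ω i j * x j)| := by
          gcongr with i hi
          exact Finset.abs_sum_le_sum_abs _ _
      _ ≤ ∑ i, ∑ j, |Ω i j| * ((x i ^ 2 + x j ^ 2) / 2) := by
          gcongr with i hi j hj
          rw [abs_mul, abs_mul]
          nlinarith [sq_abs (x i), sq_abs (x j), sq_nonneg (|x i| - |x j|),
            abs_nonneg (Ω i j), abs_nonneg (x i), abs_nonneg (x j)]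
      _ = ∑ i, (∑ j, |Ω i j|) * x i ^ 2 := by
          have hswap : ∑ i, ∑ j, |Ω i j| * x j ^ 2 = ∑ i, ∑ j, |Ω i j| * x i ^ 2 := by
            rw [Finset.sum_comm]
            exact Finset.sum_congr rfl fun i _ => Finset.sum_congr rfl fun j _ => by
              rw [habs]
          have expand : ∀ i, ∑ j, |Ω i j| * ((x i ^ 2 + x j ^ 2) / 2)
              = (∑ j, |Ω i j| * x i ^ 2) / 2 + (∑ j, |Ω i j| * x j ^ 2) / 2 := by
            intro i
            rw [Finset.sum_div, Finset.sum_div, ← Finset.sum_add_distrib]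
            exact Finset.sum_congr rfl fun j _ => by ring
          simp_rw [expand]
          rw [Finset.sum_add_distrib, ← Finset.sum_div, ← Finset.sum_div, hswap, add_halves]
          exact Finset.sum_congr rfl fun i _ => (Finset.sum_mul _ _ _).symm
  have hdnn : ∀ z : Fin n → ℝ, 0 ≤ z ⬝ᵥ z := fun z =>
    Finset.sum_nonneg fun i _ => mul_self_nonneg _
  -- A + B is positive definite
  have hApBsymm : (A + B)ᵀ = A + B := by rw [Matrix.transpose_add, hAsymm, hBsymm]
  have hApBquad : ∀ x : Fin n → ℝ, x ⬝ᵥ (A + B) *ᵥ x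
      = x ⬝ᵥ Λ *ᵥ x + (2 * α) * (x ⬝ᵥ Ωb *ᵥ x) - x ⬝ᵥ Ω *ᵥ x := by
    intro x
    rw [hAdef, hBdef]
    simp [Matrix.add_mulVec, Matrix.sub_mulVec, Matrix.smul_mulVec,
      dotProduct_add, dotProduct_sub, dotProduct_smul, smul_eq_mul]
    ring
  have hApB : (A + B).PosDef := by
    rw [Matrix.posDef_iff_dotProduct_mulVec]
    constructor
    · show (A + B)ᴴ = A + B
      simpa using hApBsymm
    · intro x hx
      have hx' : ∃ i, x i ≠ 0 := Function.ne_iff.mp hx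
      obtain ⟨i0, hi0⟩ := hx'
      have hΛpos : 0 < ∑ i, P i i * x i ^ 2 := by
        refine Finset.sum_pos' (fun i _ => mul_nonneg (hdiagP i).le (sq_nonneg _)) ⟨i0, Finset.mem_univ _, ?_⟩
        have : 0 < x i0 ^ 2 := by
          rw [pow_two]
          exact mul_self_pos.mpr hi0
        exact mul_pos (hdiagP i0) this
      have hSnn : 0 ≤ ∑ i, (∑ j, |Ω i j|) * x i ^ 2 :=
        Finset.sum_nonneg fun i _ =>
          mul_nonneg (Finset.sum_nonneg fun j _ => abs_nonneg _) (sq_nonneg _)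
      have hb := hSbound x
      have := hApBquad x
      show 0 < star x ⬝ᵥ (A + B) *ᵥ x
      rw [show star x = x from rfl, this, hquadΛ x, hquadΩb x]
      rw [abs_le] at hb
      nlinarith [hb.1, hb.2]
  -- coercivity constants
  obtain ⟨m1, hm1, hm1'⟩ := coercive hn (A + B) hApB
  obtain ⟨m2, hm2, hm2'⟩ := coercive hn P hP
  obtain ⟨mA, hmA, hmA'⟩ := coercive hn A hApos
  -- upper bound for A
  set a : Fin n → ℝ := fun i => P i i + α * ∑ j, |Ω i j| with ha
  have hai : ∀ i, 0 < a i := fun i => by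
    have h2 : (0:ℝ) ≤ ∑ j, |Ω i j| := Finset.sum_nonneg fun j _ => abs_nonneg _
    have h3 := hdiagP i
    show 0 < P i i + α * ∑ j, |Ω i j|
    positivity
  set L : ℝ := ∑ i, a i with hLdef
  have hLpos : 0 < L := by
    haveI : Nonempty (Fin n) := ⟨⟨0, Nat.pos_of_ne_zero hn⟩⟩
    exact Finset.sum_pos (fun i _ => hai i) Finset.univ_nonempty
  have hquadA : ∀ x : Fin n → ℝ, x ⬝ᵥ A *ᵥ x = ∑ i, a i * x i ^ 2 := by
    intro x
    rw [hAdiag]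
    simp [dotProduct, Matrix.mulVec_diagonal]
    exact Finset.sum_congr rfl fun i _ => by rw [ha]; ring
  have hAupper : ∀ x : Fin n → ℝ, x ⬝ᵥ A *ᵥ x ≤ L * (x ⬝ᵥ x) := by
    intro x
    rw [hquadA, hLdef, Finset.sum_mul]
    refine Finset.sum_le_sum fun i _ => ?_
    have hsq : x i ^ 2 ≤ x ⬝ᵥ x := by
      have := Finset.single_le_sum (f := fun j => x j * x j)
        (fun j _ => mul_self_nonneg _) (Finset.mem_univ i)
      simpa [dotProduct, pow_two] using this
    exact mul_le_mul_of_nonneg_left hsq (hai i).le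
  -- the contraction constant
  set m : ℝ := min m1 m2 with hmdef
  have hmpos : 0 < m := lt_min hm1 hm2
  set c : ℝ := 1 - m / L with hcdef
  have hclt : c < 1 := by
    rw [hcdef]
    have : 0 < m / L := div_pos hmpos hLpos
    linarith
  -- m ≤ L
  have hmL : m ≤ L := by
    set x0 : Fin n → ℝ := Pi.single ⟨0, Nat.pos_of_ne_zero hn⟩ 1 with hx0
    have hx0ne : x0 ≠ 0 := by
      rw [hx0]
      intro h
      have := congrFun h ⟨0, Nat.pos_of_ne_zero hn⟩
      simp at this
    have hx0dot : x0 ⬝ᵥ x0 = 1 := by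
      rw [hx0]
      simp [dotProduct, Pi.single_apply]
    have hApBexp : x0 ⬝ᵥ (A + B) *ᵥ x0 = x0 ⬝ᵥ A *ᵥ x0 + x0 ⬝ᵥ B *ᵥ x0 := by
      simp [Matrix.add_mulVec, dotProduct_add]
    have hPexp : x0 ⬝ᵥ P *ᵥ x0 = x0 ⬝ᵥ A *ᵥ x0 - x0 ⬝ᵥ B *ᵥ x0 := by
      rw [← hAB]
      simp [Matrix.sub_mulVec, dotProduct_sub]
    have h1 := hm1' x0
    have h2 := hm2' x0
    have h3 := hAupper x0
    rw [hx0dot, mul_one] at h1 h2 h3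
    have : m1 + m2 ≤ 2 * L := by rw [hApBexp] at h1; rw [hPexp] at h2; linarith
    have hm1' : m ≤ m1 := min_le_left _ _
    have hm2'' : m ≤ m2 := min_le_right _ _
    linarith
  have hc0 : 0 ≤ c := by
    rw [hcdef]
    have : m / L ≤ 1 := (div_le_one hLpos).mpr hmL
    linarith
  -- the contraction estimate
  have hkey : ∀ x y : Fin n → ℝ, A *ᵥ y = B *ᵥ x →
      y ⬝ᵥ A *ᵥ y ≤ c * (x ⬝ᵥ A *ᵥ x) := by
    intro x y hxy
    have e1 : x ⬝ᵥ A *ᵥ y = y ⬝ᵥ A *ᵥ x := symmdot A hAsymm x y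
    have e2 : x ⬝ᵥ B *ᵥ y = y ⬝ᵥ B *ᵥ x := symmdot B hBsymm x y
    have e3 : y ⬝ᵥ B *ᵥ x = y ⬝ᵥ A *ᵥ y := by rw [← hxy]
    have hsum : (x - y) ⬝ᵥ (A + B) *ᵥ (x - y) + (x + y) ⬝ᵥ P *ᵥ (x + y)
        = 2 * (x ⬝ᵥ A *ᵥ x - y ⬝ᵥ A *ᵥ y) := by
      rw [← hAB]
      simp only [Matrix.add_mulVec, Matrix.sub_mulVec, Matrix.mulVec_add, Matrix.mulVec_sub,
        dotProduct_add, dotProduct_sub, sub_dotProduct,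
        add_dotProduct]
      linarith [e1, e2, e3]
    have hdotexp : (x - y) ⬝ᵥ (x - y) + (x + y) ⬝ᵥ (x + y) = 2 * (x ⬝ᵥ x) + 2 * (y ⬝ᵥ y) := by
      simp only [dotProduct_sub, sub_dotProduct, dotProduct_add,
        add_dotProduct]
      linarith [dotProduct_comm x y]
    have hb1 := hm1' (x - y)
    have hb2 := hm2' (x + y)
    have hmm1 : m * ((x - y) ⬝ᵥ (x - y)) ≤ m1 * ((x - y) ⬝ᵥ (x - y)) :=
      mul_le_mul_of_nonneg_right (min_le_left _ _) (hdnn _)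
    have hmm2 : m * ((x + y) ⬝ᵥ (x + y)) ≤ m2 * ((x + y) ⬝ᵥ (x + y)) :=
      mul_le_mul_of_nonneg_right (min_le_right _ _) (hdnn _)
    have hmd : m * ((x - y) ⬝ᵥ (x - y)) + m * ((x + y) ⬝ᵥ (x + y))
        = 2 * (m * (x ⬝ᵥ x)) + 2 * (m * (y ⬝ᵥ y)) := by
      have := congrArg (fun t => m * t) hdotexp
      linarith [this]
    have hlow : 2 * (m * (x ⬝ᵥ x)) ≤ 2 * (x ⬝ᵥ A *ᵥ x - y ⬝ᵥ A *ᵥ y) := by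
      have hynn : 0 ≤ m * (y ⬝ᵥ y) := mul_nonneg hmpos.le (hdnn y)
      linarith [hb1, hb2, hmm1, hmm2, hsum, hmd]
    have hup := hAupper x
    have hmLdiv : m * (x ⬝ᵥ x) ≥ (m / L) * (x ⬝ᵥ A *ᵥ x) := by
      rw [div_mul_eq_mul_div, ge_iff_le, div_le_iff₀ hLpos]
      calc m * (x ⬝ᵥ A *ᵥ x) ≤ m * (L * (x ⬝ᵥ x)) :=
            mul_le_mul_of_nonneg_left hup hmpos.le
        _ = m * (x ⬝ᵥ x) * L := by ring
    have hexp : (1 - m / L) * (x ⬝ᵥ A *ᵥ x)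
        = x ⬝ᵥ A *ᵥ x - (m / L) * (x ⬝ᵥ A *ᵥ x) := by ring
    rw [hcdef]
    linarith [hlow, hmLdiv, hexp]
  -- invertibility
  have hAdet : IsUnit A.det := (Matrix.isUnit_iff_isUnit_det _).mp hApos.isUnit
  have hPdet : IsUnit P.det := (Matrix.isUnit_iff_isUnit_det _).mp hP.isUnit
  have hAinv : ∀ v : Fin n → ℝ, A *ᵥ (A⁻¹ *ᵥ v) = v := fun v => by
    rw [Matrix.mulVec_mulVec, Matrix.mul_nonsing_inv _ hAdet, Matrix.one_mulVec]
  have hPinv : P *ᵥ (P⁻¹ *ᵥ d) = d := by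
    rw [Matrix.mulVec_mulVec, Matrix.mul_nonsing_inv _ hPdet, Matrix.one_mulVec]
  -- error sequence
  set e : ℕ → Fin n → ℝ := fun k => w k - P⁻¹ *ᵥ d with he
  have hstep : ∀ k, A *ᵥ e (k + 1) = B *ᵥ e k := by
    intro k
    have h1 : A *ᵥ w (k + 1) = B *ᵥ w k + d := by
      rw [hw k, Matrix.mulVec_add, hAinv, hAinv]
    have h3 : A *ᵥ (P⁻¹ *ᵥ d) - B *ᵥ (P⁻¹ *ᵥ d) = d := by
      rw [← Matrix.sub_mulVec, hAB, hPinv]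
    show A *ᵥ (w (k + 1) - P⁻¹ *ᵥ d) = B *ᵥ (w k - P⁻¹ *ᵥ d)
    rw [Matrix.mulVec_sub, Matrix.mulVec_sub, h1]
    linear_combination -h3
  set V : ℕ → ℝ := fun k => e k ⬝ᵥ A *ᵥ e k with hV
  have hVstep : ∀ k, V (k + 1) ≤ c * V k := fun k => hkey (e k) (e (k + 1)) (hstep k)
  have hVle : ∀ k, V k ≤ c ^ k * V 0 := by
    intro k
    induction k with
    | zero => simp
    | succ k ih =>
      calc V (k + 1) ≤ c * V k := hVstep k
        _ ≤ c * (c ^ k * V 0) := mul_le_mul_of_nonneg_left ih hc0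
        _ = c ^ (k + 1) * V 0 := by ring
  have hVnn : ∀ k, 0 ≤ V k := by
    intro k
    have := hmA' (e k)
    nlinarith [hdnn (e k), hmA]
  have hgeo : Filter.Tendsto (fun k => c ^ k * V 0) Filter.atTop (nhds 0) := by
    have := (tendsto_pow_atTop_nhds_zero_of_lt_one hc0 hclt).mul_const (V 0)
    simpa using this
  have hVtend : Filter.Tendsto V Filter.atTop (nhds 0) := squeeze_zero hVnn hVle hgeo
  have hee : Filter.Tendsto (fun k => e k ⬝ᵥ e k) Filter.atTop (nhds 0) := by
    refine squeeze_zero (g := fun k => mA⁻¹ * V k) (fun k => hdnn _) (fun k => ?_) ?_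
    · have h := hmA' (e k)
      calc e k ⬝ᵥ e k = mA⁻¹ * (mA * (e k ⬝ᵥ e k)) := by field_simp
        _ ≤ mA⁻¹ * V k := mul_le_mul_of_nonneg_left h (inv_nonneg.mpr hmA.le)
    · have := hVtend.const_mul mA⁻¹
      simpa using this
  have hcoord : ∀ i, Filter.Tendsto (fun k => e k i) Filter.atTop (nhds 0) := by
    intro i
    apply squeeze_zero_norm (a := fun k => Real.sqrt (e k ⬝ᵥ e k))
    · intro k
      have h1 : e k i ^ 2 ≤ e k ⬝ᵥ e k := by
        have := Finset.single_le_sum (f := fun j => e k j * e k j)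
          (fun j _ => mul_self_nonneg _) (Finset.mem_univ i)
        simpa [dotProduct, pow_two] using this
      calc ‖e k i‖ = Real.sqrt (e k i ^ 2) := by
            rw [Real.sqrt_sq_eq_abs, Real.norm_eq_abs]
        _ ≤ Real.sqrt (e k ⬝ᵥ e k) := Real.sqrt_le_sqrt h1
    · have := (Real.continuous_sqrt.tendsto 0).comp hee
      simpa [Function.comp_def] using this
  rw [tendsto_pi_nhds]
  intro i
  have := (hcoord i).add (tendsto_const_nhds (x := (P⁻¹ *ᵥ d) i))
  have heq : (fun k => e k i + (P⁻¹ *ᵥ d) i) = fun k => w k i := by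
    funext k
    rw [he]
    simp
  rw [heq] at this
  simpa using this
end
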